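/- Define, for a univariate polynomial f over ℚ(x_1,…,x_a), the type B Demazure expression ∂̃(f) = Σ_{p=1}^{a} ( f(x_p) − f(−x_p) ) / ( 2 x_p · Π_{u≠p} (x_p^2 − x_u^2) ). Then ∂̃(x^k) = 0 when k is even, and ∂̃(x^{2j+1}) = h_{j−a+1}(x_1^2,…,x_a^2) for all j ≥ 0. -/

import Mathlib

open MvPolynomial Finset

namespace TypeBAux

variable {K : Type*} [Field K] {a : ℕ}

/-- The divided-difference sum. -/
noncomputable def Sd (y : Fin a → K) (j : ℕ) : K :=
  ∑ p : Fin a, y p ^ j / ∏ u ∈ Finset.univ.erase p, (y p - y u)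

/-- Generating series of complete homogeneous symmetric functions of `y`. -/
noncomputable def HS (y : Fin a → K) : PowerSeries K :=
  ∏ p : Fin a, PowerSeries.mk fun n => y p ^ n

/-- Complete homogeneous symmetric function values, with `Hh m = 0` for `m < 0`. -/
noncomputable def Hh (y : Fin a → K) (m : ℤ) : K :=
  if m < 0 then 0 else PowerSeries.coeff m.toNat (HS y)

noncomputable def Pp (y : Fin a → K) : Polynomial K :=
  ∏ p : Fin a, (Polynomial.X - Polynomial.C (y p))

noncomputable def Qq (y : Fin a → K) : Polynomial K :=
  ∏ p : Fin a, (1 - Polynomial.C (y p) * Polynomial.X)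

lemma monic_Pp (y : Fin a → K) : (Pp y).Monic :=
  Polynomial.monic_prod_of_monic _ _ fun p _ => Polynomial.monic_X_sub_C (y p)

lemma natDegree_Pp (y : Fin a → K) : (Pp y).natDegree = a := by
  rw [Pp, Polynomial.natDegree_prod_of_monic _ _ fun p _ => Polynomial.monic_X_sub_C (y p)]
  simp

lemma reverse_X_sub_C (c : K) :
    (Polynomial.X - Polynomial.C c).reverse = 1 - Polynomial.C c * Polynomial.X := by
  ext n
  rw [Polynomial.coeff_reverse, Polynomial.natDegree_X_sub_C]
  match n with
  | 0 => simp
  | 1 => simp [Polynomial.coeff_one]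
  | (n+2) => rw [Polynomial.revAt_eq_self_of_lt (by omega)]; simp [Polynomial.coeff_one, Polynomial.coeff_X, Polynomial.coeff_C]

lemma reverse_prod {ι : Type*} (s : Finset ι) (f : ι → Polynomial K) :
    (∏ i ∈ s, f i).reverse = ∏ i ∈ s, (f i).reverse := by
  classical
  induction s using Finset.cons_induction with
  | empty =>
    rw [Finset.prod_empty, Finset.prod_empty]; unfold Polynomial.reverse; simp
  | cons i s hi ih =>
    rw [Finset.prod_cons, Finset.prod_cons, Polynomial.reverse_mul_of_domain, ih]

lemma Qq_eq_reverse (y : Fin a → K) : Qq y = (Pp y).reverse := by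
  rw [Pp, reverse_prod]
  exact Finset.prod_congr rfl fun p _ => (reverse_X_sub_C (y p)).symm

lemma Qq_coeff_eq (y : Fin a → K) {t : ℕ} (ht : t ≤ a) :
    (Qq y).coeff t = (Pp y).coeff (a - t) := by
  rw [Qq_eq_reverse, Polynomial.coeff_reverse, natDegree_Pp,
    Polynomial.revAt_le ht]

lemma Qq_coeff_zero (y : Fin a → K) : (Qq y).coeff 0 = 1 := by
  rw [Qq_coeff_eq y (Nat.zero_le a), Nat.sub_zero]
  have h := (monic_Pp y).coeff_natDegree
  rwa [natDegree_Pp] at h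

lemma Qq_coeff_eq_zero (y : Fin a → K) {t : ℕ} (ht : a < t) : (Qq y).coeff t = 0 := by
  apply Polynomial.coeff_eq_zero_of_natDegree_lt
  calc (Qq y).natDegree ≤ (Pp y).natDegree := by
        rw [Qq_eq_reverse]; exact Polynomial.reverse_natDegree_le _
    _ < t := by rw [natDegree_Pp]; exact ht

/-- Vieta at the root `y p`. -/
lemma root_rec (y : Fin a → K) (p : Fin a) :
    y p ^ a = -∑ i ∈ Finset.range a, (Qq y).coeff (i + 1) * y p ^ (a - (i + 1)) := by
  have h0 : (Pp y).eval (y p) = 0 := by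
    rw [Pp, Polynomial.eval_prod]
    exact Finset.prod_eq_zero (Finset.mem_univ p) (by simp)
  have h1 : ∑ t ∈ Finset.range (a + 1), (Pp y).coeff t * y p ^ t = 0 := by
    rw [← Polynomial.eval_eq_sum_range'
      (by rw [natDegree_Pp]; omega : (Pp y).natDegree < a + 1)]
    exact h0
  have h2 : ∑ s ∈ Finset.range (a + 1), (Qq y).coeff s * y p ^ (a - s)
      = ∑ t ∈ Finset.range (a + 1), (Pp y).coeff t * y p ^ t := by
    rw [← Finset.sum_range_reflect]
    refine Finset.sum_congr rfl fun s hs => ?_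
    rw [Finset.mem_range] at hs
    have e1 : a + 1 - 1 - s = a - s := by omega
    rw [e1, Qq_coeff_eq y (Nat.sub_le a s)]
    have e2 : a - (a - s) = s := by omega
    rw [e2]
  rw [h1] at h2
  rw [Finset.sum_range_succ'] at h2
  rw [Qq_coeff_zero] at h2
  rw [one_mul, Nat.sub_zero] at h2
  exact eq_neg_of_add_eq_zero_right h2

/-- Recursion for `Sd`. -/
lemma Sd_rec (y : Fin a → K) {j : ℕ} (hj : a ≤ j) :
    Sd y j = -∑ i ∈ Finset.range a, (Qq y).coeff (i + 1) * Sd y (j - (i + 1)) := by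
  have key : ∀ p : Fin a, y p ^ j / ∏ u ∈ Finset.univ.erase p, (y p - y u)
      = ∑ i ∈ Finset.range a,
          -((Qq y).coeff (i + 1) * (y p ^ (j - (i + 1)) / ∏ u ∈ Finset.univ.erase p, (y p - y u))) := by
    intro p
    have hyj : y p ^ j = ∑ i ∈ Finset.range a, -((Qq y).coeff (i + 1) * y p ^ (j - (i + 1))) := by
      have h3 : y p ^ j = y p ^ (j - a) * y p ^ a := by
        rw [← pow_add]; congr 1; omega
      rw [h3, root_rec y p, mul_neg, Finset.mul_sum, ← Finset.sum_neg_distrib]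
      refine Finset.sum_congr rfl fun i hi => ?_
      rw [Finset.mem_range] at hi
      congr 1
      rw [mul_left_comm, ← pow_add]
      congr 2
      omega
    rw [hyj, Finset.sum_div]
    refine Finset.sum_congr rfl fun i _ => ?_
    rw [neg_div, mul_div_assoc]
  rw [Sd]
  simp_rw [key]
  rw [Finset.sum_comm]
  simp only [Sd, Finset.mul_sum, Finset.sum_neg_distrib]

lemma geom_factor (c : K) :
    (1 - PowerSeries.C c * PowerSeries.X) * PowerSeries.mk (fun n => c ^ n) = 1 := by
  ext n
  rw [sub_mul, one_mul, map_sub, mul_assoc]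
  cases n with
  | zero => simp
  | succ n => simp [PowerSeries.coeff_succ_X_mul, PowerSeries.coeff_mk, pow_succ,
      PowerSeries.coeff_one, mul_comm]

lemma Qq_mul_HS (y : Fin a → K) : (Qq y : PowerSeries K) * HS y = 1 := by
  have hcast : ((Qq y : Polynomial K) : PowerSeries K)
      = ∏ p : Fin a, (1 - PowerSeries.C (y p) * PowerSeries.X) := by
    rw [Qq, ← Polynomial.coeToPowerSeries.ringHom_apply, map_prod]
    refine Finset.prod_congr rfl fun p _ => ?_
    rw [Polynomial.coeToPowerSeries.ringHom_apply]
    push_cast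
    simp [Polynomial.coe_sub, Polynomial.coe_mul, Polynomial.coe_C, Polynomial.coe_X,
      Polynomial.coe_one]
  rw [hcast, HS, ← Finset.prod_mul_distrib]
  rw [Finset.prod_congr rfl fun p (_ : p ∈ Finset.univ) => geom_factor (y p)]
  exact Finset.prod_const_one

lemma Hh_zero (y : Fin a → K) : Hh y 0 = 1 := by
  rw [Hh, if_neg (by omega)]
  have : (PowerSeries.constantCoeff) (HS y) = 1 := by
    rw [HS, map_prod]
    simp
  simpa [PowerSeries.coeff_zero_eq_constantCoeff] using this

/-- Newton-type recursion for `Hh`. -/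
lemma Hh_rec (y : Fin a → K) {m : ℤ} (hm : 1 ≤ m) :
    Hh y m = -∑ i ∈ Finset.range a, (Qq y).coeff (i + 1) * Hh y (m - (i + 1)) := by
  set M := m.toNat with hMdef
  have hM1 : 1 ≤ M := by omega
  have h0 : (PowerSeries.coeff M) ((Qq y : PowerSeries K) * HS y) = 0 := by
    rw [Qq_mul_HS]
    rw [PowerSeries.coeff_one, if_neg (by omega)]
  rw [PowerSeries.coeff_mul, Finset.Nat.sum_antidiagonal_eq_sum_range_succ_mk] at h0
  simp_rw [Polynomial.coeff_coe] at h0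
  rw [Finset.sum_range_succ'] at h0
  rw [Qq_coeff_zero, one_mul, Nat.sub_zero] at h0
  have hHm : Hh y m = PowerSeries.coeff M (HS y) := by rw [Hh, if_neg (by omega)]
  rw [hHm, eq_neg_of_add_eq_zero_right h0]
  congr 1
  have hFf : ∀ i ∈ Finset.range M,
      (Qq y).coeff (i + 1) * PowerSeries.coeff (M - (i + 1)) (HS y)
        = (Qq y).coeff (i + 1) * Hh y (m - (i + 1)) := by
    intro i hi
    rw [Finset.mem_range] at hi
    rw [Hh, if_neg (by omega)]
    have h4 : (m - ((i : ℤ) + 1)).toNat = M - (i + 1) := by omega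
    rw [h4]
  have e1 : ∑ i ∈ Finset.range M, (Qq y).coeff (i + 1) * Hh y (m - (i + 1))
      = ∑ i ∈ Finset.range (M + a), (Qq y).coeff (i + 1) * Hh y (m - (i + 1)) := by
    refine Finset.sum_subset (Finset.range_subset_range.2 (Nat.le_add_right M a)) ?_
    intro i _ hi
    rw [Finset.mem_range, not_lt] at hi
    have hneg : m - ((i : ℤ) + 1) < 0 := by omega
    rw [Hh, if_pos hneg, mul_zero]
  have e2 : ∑ i ∈ Finset.range a, (Qq y).coeff (i + 1) * Hh y (m - (i + 1))
      = ∑ i ∈ Finset.range (M + a), (Qq y).coeff (i + 1) * Hh y (m - (i + 1)) := by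
    refine Finset.sum_subset (Finset.range_subset_range.2 (Nat.le_add_left a M)) ?_
    intro i _ hi
    rw [Finset.mem_range, not_lt] at hi
    rw [Qq_coeff_eq_zero y (by omega), zero_mul]
  rw [Finset.sum_congr rfl hFf, e1]
  exact e2.symm

/-- Lagrange-interpolation base case. -/
lemma coeff_basis_top (y : Fin a → K) (hy : Function.Injective y) (p : Fin a) :
    (Lagrange.basis Finset.univ y p).coeff (a - 1)
      = (∏ u ∈ Finset.univ.erase p, (y p - y u))⁻¹ := by
  have hb : (Lagrange.basis Finset.univ y p).natDegree = a - 1 := by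
    rw [Lagrange.natDegree_basis hy.injOn (Finset.mem_univ p), Finset.card_univ,
      Fintype.card_fin]
  rw [← hb, ← Polynomial.leadingCoeff, Lagrange.basis, Polynomial.leadingCoeff_prod,
    ← Finset.prod_inv_distrib]
  refine Finset.prod_congr rfl fun u _ => ?_
  rw [Lagrange.basisDivisor, Polynomial.leadingCoeff_mul]
  simp

lemma Sd_of_lt (y : Fin a → K) (hy : Function.Injective y) {j : ℕ} (hj : j < a) :
    Sd y j = if j = a - 1 then 1 else 0 := by
  have hdeg : (Polynomial.X ^ j : Polynomial K).degree < (Finset.univ : Finset (Fin a)).card := by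
    rw [Polynomial.degree_X_pow, Finset.card_univ, Fintype.card_fin]
    exact_mod_cast hj
  have hinterp := Lagrange.eq_interpolate (v := y) hy.injOn hdeg
  have hco := congrArg (fun q : Polynomial K => q.coeff (a - 1)) hinterp
  simp only [Lagrange.interpolate_apply, Polynomial.finset_sum_coeff, Polynomial.coeff_C_mul,
    Polynomial.eval_pow, Polynomial.eval_X, Polynomial.coeff_X_pow] at hco
  simp_rw [coeff_basis_top y hy] at hco
  rw [Sd]
  simp_rw [div_eq_mul_inv]
  rw [← hco]
  by_cases hja : j = a - 1
  · rw [if_pos hja, if_pos hja.symm]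
  · rw [if_neg hja, if_neg (fun h => hja h.symm)]

/-- Main identity. -/
lemma Sd_eq_Hh (y : Fin a → K) (hy : Function.Injective y) (ha : 1 ≤ a) (j : ℕ) :
    Sd y j = Hh y ((j : ℤ) - (a - 1 : ℕ)) := by
  induction j using Nat.strong_induction_on with
  | _ j IH =>
    rcases lt_or_ge j a with hj | hj
    · rw [Sd_of_lt y hy hj]
      by_cases hja : j = a - 1
      · rw [if_pos hja]
        have h5 : ((j : ℤ) - (a - 1 : ℕ)) = 0 := by omega
        rw [h5, Hh_zero]
      · rw [if_neg hja]
        have hneg : ((j : ℤ) - (a - 1 : ℕ)) < 0 := by omega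
        rw [Hh, if_pos hneg]
    · rw [Sd_rec y hj, Hh_rec y (by omega : (1 : ℤ) ≤ (j : ℤ) - (a - 1 : ℕ))]
      congr 1
      refine Finset.sum_congr rfl fun i hi => ?_
      rw [Finset.mem_range] at hi
      rw [IH (j - (i + 1)) (by omega)]
      congr 2
      omega

lemma coeff_HS (y : Fin a → K) (m : ℕ) :
    PowerSeries.coeff m (HS y)
      = ∑ l ∈ Finset.finsuppAntidiag (Finset.univ : Finset (Fin a)) m,
          ∏ i : Fin a, y i ^ l i := by
  rw [HS, PowerSeries.coeff_prod]
  refine Finset.sum_congr rfl fun l _ => Finset.prod_congr rfl fun i _ => ?_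
  rw [PowerSeries.coeff_mk]

lemma prod_count (y : Fin a → K) (s : Multiset (Fin a)) :
    (s.map y).prod = ∏ i : Fin a, y i ^ s.count i := by
  classical
  rw [Finset.prod_multiset_map_count]
  refine Finset.prod_subset (Finset.subset_univ _) fun i _ hi => ?_
  rw [Multiset.count_eq_zero_of_notMem (fun h => hi (Multiset.mem_toFinset.2 h)), pow_zero]

lemma sym_sum_eq (y : Fin a → K) (m : ℕ) :
    ∑ s : Sym (Fin a) m, ((s : Multiset (Fin a)).map y).prod
      = ∑ l ∈ Finset.finsuppAntidiag (Finset.univ : Finset (Fin a)) m,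
          ∏ i : Fin a, y i ^ l i := by
  classical
  haveI : Fintype {P : Fin a →₀ ℕ // P.sum (fun _ => id) = m} :=
    Fintype.ofEquiv _ (Sym.equivNatSum (Fin a) m)
  have h1 : ∑ l ∈ Finset.finsuppAntidiag (Finset.univ : Finset (Fin a)) m,
        ∏ i : Fin a, y i ^ l i
      = ∑ l : {P : Fin a →₀ ℕ // P.sum (fun _ => id) = m},
          ∏ i : Fin a, y i ^ (l : Fin a →₀ ℕ) i := by
    refine Finset.sum_subtype _ (fun l => ?_) _
    rw [Finset.mem_finsuppAntidiag']
    simp [Finsupp.sum_fintype]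
  rw [h1, ← Equiv.sum_comp (Sym.equivNatSum (Fin a) m)]
  refine Finset.sum_congr rfl fun s _ => ?_
  rw [prod_count]
  refine Finset.prod_congr rfl fun i _ => ?_
  rw [Sym.coe_equivNatSum_apply_apply]

lemma coeff_HS_eq_sym (y : Fin a → K) (m : ℕ) :
    PowerSeries.coeff m (HS y)
      = ∑ s : Sym (Fin a) m, ((s : Multiset (Fin a)).map y).prod := by
  rw [coeff_HS, sym_sum_eq]

end TypeBAux

/-- The images of the variables `x_1, …, x_a` in the field of rational
functions `ℚ(x_1,…,x_a)`. -/
noncomputable def xv (N : ℕ) (i : Fin N) : FractionRing (MvPolynomial (Fin N) ℚ) :=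
  algebraMap (MvPolynomial (Fin N) ℚ) (FractionRing (MvPolynomial (Fin N) ℚ)) (X i)

/-- The type B Demazure expression
`∂̃(f) = ∑_{p=1}^{a} (f(x_p) − f(−x_p)) / (2 x_p ∏_{u≠p} (x_p² − x_u²))`
for a univariate polynomial `f` over `ℚ(x_1,…,x_a)`. -/
noncomputable def Dtilde (a : ℕ) (f : Polynomial (FractionRing (MvPolynomial (Fin a) ℚ))) :
    FractionRing (MvPolynomial (Fin a) ℚ) :=
  ∑ p : Fin a,
    (f.eval (xv a p) - f.eval (-(xv a p))) /
      (2 * xv a p * ∏ u ∈ Finset.univ.erase p, ((xv a p) ^ 2 - (xv a u) ^ 2))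

/-- `∂̃(x^k) = 0` when `k` is even, and `∂̃(x^{2j+1}) = h_{j−a+1}(x_1²,…,x_a²)`
for all `j ≥ 0` (with `h_i = 0` for `i < 0`). -/
theorem typeB_demazure_on_monomials (a : ℕ) (ha : 1 ≤ a) :
    (∀ k : ℕ, Even k → Dtilde a (Polynomial.X ^ k) = 0) ∧
    (∀ j : ℕ,
      Dtilde a (Polynomial.X ^ (2 * j + 1)) =
        if j < a - 1 then 0
        else
          algebraMap (MvPolynomial (Fin a) ℚ) (FractionRing (MvPolynomial (Fin a) ℚ))
            ((aeval fun i : Fin a => (X i : MvPolynomial (Fin a) ℚ) ^ 2)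
              (hsymm (Fin a) ℚ (j - (a - 1))))) := by
  classical
  set K := FractionRing (MvPolynomial (Fin a) ℚ) with hK
  have halg : Function.Injective (algebraMap (MvPolynomial (Fin a) ℚ) K) :=
    IsFractionRing.injective _ _
  have hx : ∀ p : Fin a, xv a p ≠ 0 := by
    intro p
    rw [xv, Ne, map_eq_zero_iff _ halg]
    exact MvPolynomial.X_ne_zero p
  set y : Fin a → K := fun p => xv a p ^ 2 with hydef
  have hy : Function.Injective y := by
    intro p u hpu
    have h1 : algebraMap (MvPolynomial (Fin a) ℚ) K ((X p) ^ 2)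
        = algebraMap (MvPolynomial (Fin a) ℚ) K ((X u) ^ 2) := by
      rw [map_pow, map_pow]; exact hpu
    have h2 : (X p : MvPolynomial (Fin a) ℚ) ^ 2 = (X u) ^ 2 := halg h1
    rw [MvPolynomial.X_pow_eq_monomial, MvPolynomial.X_pow_eq_monomial,
      MvPolynomial.monomial_eq_monomial_iff] at h2
    rcases h2 with ⟨h3, -⟩ | ⟨h4, -⟩
    · exact (Finsupp.single_left_inj (by norm_num)).1 h3
    · exact absurd h4 one_ne_zero
  constructor
  · intro k hk
    rw [Dtilde]
    apply Finset.sum_eq_zero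
    intro p _
    rw [Polynomial.eval_pow, Polynomial.eval_pow, Polynomial.eval_X, Polynomial.eval_X,
      hk.neg_pow, sub_self, zero_div]
  · intro j
    have h2K : (2 : K) ≠ 0 := by
      have : ((2 : MvPolynomial (Fin a) ℚ) : MvPolynomial (Fin a) ℚ) ≠ 0 := two_ne_zero
      have h := (map_ne_zero_iff _ halg).2 this
      rwa [map_ofNat] at h
    have hD : Dtilde a (Polynomial.X ^ (2 * j + 1)) = TypeBAux.Sd y j := by
      rw [Dtilde, TypeBAux.Sd]
      refine Finset.sum_congr rfl fun p _ => ?_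
      have hodd : Odd (2 * j + 1) := odd_two_mul_add_one j
      rw [Polynomial.eval_pow, Polynomial.eval_pow, Polynomial.eval_X, Polynomial.eval_X,
        hodd.neg_pow, sub_neg_eq_add]
      have hDp : (∏ u ∈ Finset.univ.erase p, (xv a p ^ 2 - xv a u ^ 2)) ≠ 0 := by
        rw [Finset.prod_ne_zero_iff]
        intro u hu
        rw [Finset.mem_erase] at hu
        exact sub_ne_zero_of_ne fun h => hu.1 (hy h.symm)
      have hyp : y p ^ j = xv a p ^ (2 * j) := by
        rw [hydef, ← pow_mul]
      have hnum : xv a p ^ (2 * j + 1) + xv a p ^ (2 * j + 1)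
          = (2 * xv a p) * xv a p ^ (2 * j) := by ring
      rw [hnum, hyp, mul_div_mul_left _ _ (mul_ne_zero h2K (hx p))]
    rw [hD, TypeBAux.Sd_eq_Hh y hy ha j]
    by_cases hja : j < a - 1
    · rw [if_pos hja, TypeBAux.Hh, if_pos (by omega)]
    · rw [if_neg hja, TypeBAux.Hh, if_neg (by omega)]
      have hm : ((j : ℤ) - (a - 1 : ℕ)).toNat = j - (a - 1) := by omega
      rw [hm, TypeBAux.coeff_HS_eq_sym]
      rw [hsymm, map_sum, map_sum]
      refine Finset.sum_congr rfl fun s _ => ?_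
      rw [map_multiset_prod, map_multiset_prod, Multiset.map_map, Multiset.map_map]
      congr 1
      refine Multiset.map_congr rfl fun i _ => ?_
      simp only [Function.comp_apply, aeval_X, map_pow]
      rfl
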